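/- Let (R, ι, σ) be an object of alg_{A/End_k(A)}. Then the set P(R) of primitive elements is naturally a Lie–Rinehart algebra over (k,A); precisely: (i) P(R) is an A-submodule of R, where a ∈ A acts by r ↦ ι(a)·r; (ii) P(R) is closed under the commutator bracket [r₁,r₂] = r₁r₂ − r₂r₁; (iii) for every r ∈ P(R), the map a ↦ σ(r)(a) is a k-linear derivation of A; (iv) for all r₁ ∈ P(R), r₂ ∈ R and a ∈ A one has [r₁, ι(a)·r₂] − ι(a)·[r₁,r₂] = ι(σ(r₁)(a))·r₂. Consequently P(R), with the commutator bracket and the restriction of σ as anchor, satisfies all the axioms of a Lie–Rinehart algebra over (k,A). -/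

import Mathlib

/-- The set of primitive elements of an object `(R, ι, σ)` of `alg_{A/End_k(A)}`:
`P(R) = { r ∈ R | r·ι(a) − ι(a)·r = ι(σ(r)(a)) for all a ∈ A }`. -/
def Prim (k : Type*) {A R : Type*} [CommRing k] [CommRing A] [Algebra k A]
    [Ring R] [Algebra k R] (ι : A →ₐ[k] R) (σ : R →ₐ[k] Module.End k A) : Set R :=
  {r | ∀ a : A, r * ι a - ι a * r = ι (σ r a)}

/-- Let `(R, ι, σ)` be an object of `alg_{A/End_k(A)}`.  Then the set `P(R)` of primitive
elements is naturally a Lie–Rinehart algebra over `(k,A)`: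
(i) `P(R)` is an `A`-submodule of `R`, where `a ∈ A` acts by `r ↦ ι(a)·r`;
(ii) `P(R)` is closed under the commutator bracket `[r₁,r₂] = r₁r₂ − r₂r₁`;
(iii) for every `r ∈ P(R)`, the map `a ↦ σ(r)(a)` is a `k`-linear derivation of `A`;
(iv) for all `r₁ ∈ P(R)`, `r₂ ∈ R` and `a ∈ A` one has
`[r₁, ι(a)·r₂] − ι(a)·[r₁,r₂] = ι(σ(r₁)(a))·r₂`. -/
theorem stmt_2 (k A R : Type*) [Field k] [CharZero k] [CommRing A] [Algebra k A]
    [Ring R] [Algebra k R] (ι : A →ₐ[k] R) (σ : R →ₐ[k] Module.End k A)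
    (hσ : ∀ (a : A) (r : R), σ (ι a * r) = (Algebra.lmul k A a) * σ r) :
    -- (i) P(R) is an A-submodule of R (0 ∈ P(R), closed under + and the A-action)
    ((0 : R) ∈ Prim k ι σ) ∧
    (∀ r₁ ∈ Prim k ι σ, ∀ r₂ ∈ Prim k ι σ, r₁ + r₂ ∈ Prim k ι σ) ∧
    (∀ a : A, ∀ r ∈ Prim k ι σ, ι a * r ∈ Prim k ι σ) ∧
    -- (ii) P(R) is closed under the commutator bracket
    (∀ r₁ ∈ Prim k ι σ, ∀ r₂ ∈ Prim k ι σ, r₁ * r₂ - r₂ * r₁ ∈ Prim k ι σ) ∧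
    -- (iii) σ(r) is a derivation of A for every r ∈ P(R)
    (∀ r ∈ Prim k ι σ, ∀ a b : A, σ r (a * b) = a * σ r b + σ r a * b) ∧
    -- (iv) the Leibniz identity relating the bracket, the A-action and the anchor
    (∀ r₁ ∈ Prim k ι σ, ∀ (r₂ : R) (a : A),
      (r₁ * (ι a * r₂) - (ι a * r₂) * r₁) - ι a * (r₁ * r₂ - r₂ * r₁) =
        ι (σ r₁ a) * r₂) := by
  refine ⟨?_, ?_, ?_, ?_, ?_, ?_⟩
  · intro a; simp
  · intro r₁ h₁ r₂ h₂ a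
    have e₁ := h₁ a; have e₂ := h₂ a
    rw [map_add, LinearMap.add_apply, map_add, ← e₁, ← e₂]; noncomm_ring
  · intro a r hr b
    have e := hr b
    have hc : ι a * ι b = ι b * ι a := by rw [← map_mul, ← map_mul, mul_comm]
    rw [hσ a r]
    have : (Algebra.lmul k A a * σ r) b = a * σ r b := rfl
    rw [this, map_mul]
    calc ι a * r * ι b - ι b * (ι a * r)
        = ι a * (r * ι b - ι b * r) := by rw [← mul_assoc, ← hc]; noncomm_ring
      _ = ι a * ι (σ r b) := by rw [e]
  · intro r₁ h₁ r₂ h₂ a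
    have e₁ := h₁ a; have e₂ := h₂ a
    have f₁ := h₁ (σ r₂ a); have f₂ := h₂ (σ r₁ a)
    have : σ (r₁ * r₂ - r₂ * r₁) a = σ r₁ (σ r₂ a) - σ r₂ (σ r₁ a) := by
      simp [map_mul, Module.End.mul_apply]
    rw [this, map_sub, ← f₁, ← f₂]
    have c₁ : r₁ * ι (σ r₂ a) = r₁ * (r₂ * ι a - ι a * r₂) := by rw [e₂]
    have c₂ : ι (σ r₂ a) * r₁ = (r₂ * ι a - ι a * r₂) * r₁ := by rw [e₂]
    have c₃ : r₂ * ι (σ r₁ a) = r₂ * (r₁ * ι a - ι a * r₁) := by rw [e₁]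
    have c₄ : ι (σ r₁ a) * r₂ = (r₁ * ι a - ι a * r₁) * r₂ := by rw [e₁]
    rw [c₁, c₂, c₃, c₄]; noncomm_ring
  · intro r hr a b
    have key : σ (r * ι a - ι a * r) = σ (ι (σ r a)) := by rw [hr a]
    have h1 : σ (ι (σ r a)) b = σ r a * b := by
      have := hσ (σ r a) 1
      rw [mul_one] at this
      rw [this, map_one, mul_one]; rfl
    have h2 : σ (r * ι a - ι a * r) b = σ r (a * b) - a * σ r b := by
      rw [map_sub, map_mul, hσ]
      have hιa : σ (ι a) = Algebra.lmul k A a := by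
        have := hσ a 1; rwa [mul_one, map_one, mul_one] at this
      simp [hιa, Module.End.mul_apply, Algebra.lmul]
    have := congrArg (fun f => f b) key
    rw [h2, h1] at this
    linear_combination this
  · intro r₁ h₁ r₂ a
    rw [← h₁ a]; noncomm_ring
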